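/- Let F = F(X) be a free group on a set X, let v and w be nontrivial cyclic words of F, and suppose there exists an automorphism φ of F such that the pair (φ(v), φ(w)) is good, i.e., either L(φ(v)) ∪ L(φ(w)) ≠ X (frugal) or L(φ(v)) ∩ L(φ(w)) = ∅ (disjoint). Then there exists a proper free splitting A * B of F such that both v and w are elliptic to A * B. -/

import Mathlib

open FreeGroup

/-- The length of a cyclic word (conjugacy class): the minimal word length of a representative. -/
noncomputable def cycLen {X : Type} [DecidableEq X] (c : ConjClasses (FreeGroup X)) : ℕ :=
  sInf {n | ∃ g : FreeGroup X, ConjClasses.mk g = c ∧ (FreeGroup.toWord g).length = n}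

/-- An element of a free group is cyclically reduced if its first letter is not
the inverse of its last letter. -/
def IsCycRed {X : Type} [DecidableEq X] (g : FreeGroup X) : Prop :=
  ∀ x : X × Bool, (FreeGroup.toWord g).head? = some x →
    (FreeGroup.toWord g).getLast? ≠ some (x.1, !x.2)

/-- The set `L(c)` of letters of `X` occurring (up to inversion) in the cyclic word `c`. -/
def usedLetters {X : Type} [DecidableEq X] (c : ConjClasses (FreeGroup X)) : Set X :=
  {x | ∃ g : FreeGroup X, ConjClasses.mk g = c ∧ IsCycRed g ∧ ∃ b : Bool, (x, b) ∈ FreeGroup.toWord g}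

/-- The action of an automorphism of the free group on cyclic words (conjugacy classes). -/
def actC {X : Type} (φ : FreeGroup X ≃* FreeGroup X) (c : ConjClasses (FreeGroup X)) :
    ConjClasses (FreeGroup X) :=
  ConjClasses.map (φ : FreeGroup X →* FreeGroup X) c

/-- `τ` is a Whitehead automorphism of the second kind with multiplier `a ∈ X ∪ X⁻¹`. -/
def IsWhiteheadMult {X : Type} (a : X × Bool) (τ : FreeGroup X ≃* FreeGroup X) : Prop :=
  ∀ x : X, τ (of x) ∈ ({of x, of x * FreeGroup.mk [a],
      (FreeGroup.mk [a])⁻¹ * of x, (FreeGroup.mk [a])⁻¹ * of x * FreeGroup.mk [a]} :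
      Set (FreeGroup X))

/-- `τ` is a relabeling automorphism: it permutes the set `X ∪ X⁻¹`. -/
def IsRelabeling {X : Type} (τ : FreeGroup X ≃* FreeGroup X) : Prop :=
  ∀ x : X, ∃ y : X × Bool, τ (of x) = FreeGroup.mk [y]

/-- Whitehead automorphisms. -/
def IsWhitehead {X : Type} (τ : FreeGroup X ≃* FreeGroup X) : Prop :=
  IsRelabeling τ ∨ ∃ a : X × Bool, IsWhiteheadMult a τ

open FreeGroup

/-- `(A, B)` is a free splitting of `F`: the natural map from the free product `A ∗ B`
to `F` is an isomorphism (internal free product). -/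
def IsFreeSplitting {F : Type} [Group F] (A B : Subgroup F) : Prop :=
  Function.Bijective (Monoid.Coprod.lift A.subtype B.subtype)

/-- `g` is elliptic to the splitting `A * B`: `g` lies in a conjugate of `A` or of `B`. -/
def Elliptic {F : Type} [Group F] (A B : Subgroup F) (g : F) : Prop :=
  ∃ y : F, y * g * y⁻¹ ∈ A ∨ y * g * y⁻¹ ∈ B

/-- A cyclic word (conjugacy class) is elliptic to `A * B` if some representative lies in
`A` or in `B`. -/
def EllipticC {F : Type} [Group F] (A B : Subgroup F) (c : ConjClasses F) : Prop :=
  ∃ g : F, ConjClasses.mk g = c ∧ (g ∈ A ∨ g ∈ B)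

/-- The pair of cyclic words `(v, w)` is frugal: together they do not use all letters of `X`. -/
def Frugal {X : Type} [DecidableEq X] (v w : ConjClasses (FreeGroup X)) : Prop :=
  usedLetters v ∪ usedLetters w ≠ Set.univ

/-- The pair `(v, w)` is disjoint: `v` and `w` share no letters. -/
def DisjPair {X : Type} [DecidableEq X] (v w : ConjClasses (FreeGroup X)) : Prop :=
  usedLetters v ∩ usedLetters w = ∅

/-- A pair is good if it is frugal or disjoint. -/
def GoodPair {X : Type} [DecidableEq X] (v w : ConjClasses (FreeGroup X)) : Prop :=
  Frugal v w ∨ DisjPair v w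

/-- `(v, w)` has minimal length in its orbit under `Aut(F)`. -/
def MinLenPair {X : Type} [DecidableEq X] (v w : ConjClasses (FreeGroup X)) : Prop :=
  ∀ φ : FreeGroup X ≃* FreeGroup X,
    cycLen v + cycLen w ≤ cycLen (actC φ v) + cycLen (actC φ w)


section AuxLemmas

open Subgroup Monoid

variable {X : Type} [DecidableEq X]

lemma exists_cycRed_conj :
    ∀ (n : ℕ) (g : FreeGroup X), (FreeGroup.toWord g).length ≤ n →
      ∃ g', ConjClasses.mk g' = ConjClasses.mk g ∧ IsCycRed g' := by
  intro n
  induction n with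
  | zero =>
    intro g hg
    refine ⟨g, rfl, ?_⟩
    intro x hx
    have h0 : g.toWord = [] := List.length_eq_zero_iff.mp (Nat.le_zero.mp hg)
    simp [h0] at hx
  | succ n ih =>
    intro g hg
    by_cases hc : IsCycRed g
    · exact ⟨g, rfl, hc⟩
    · unfold IsCycRed at hc
      push_neg at hc
      obtain ⟨x, hx, hlast⟩ := hc
      have hne : g.toWord ≠ [] := by intro h; simp [h] at hx
      have hhd : g.toWord.head hne = x := by
        rw [List.head?_eq_head hne] at hx
        exact Option.some_injective _ hx
      have hcons : g.toWord = x :: g.toWord.tail := by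
        rw [← hhd]; exact (List.cons_head_tail hne).symm
      rcases (g.toWord.tail).eq_nil_or_concat with ht | ⟨M, a, hM⟩
      · rw [hcons, ht] at hlast
        simp at hlast
        rw [Prod.ext_iff] at hlast
        cases hx2 : x.2 <;> simp [hx2] at hlast
      · have hL : g.toWord = x :: (M ++ [a]) := by rw [hcons, hM, List.concat_eq_append]
        have ha : a = (x.1, !x.2) := by
          have : g.toWord.getLast? = some a := by
            rw [hcons, hM, ← List.concat_cons, List.concat_eq_append, List.getLast?_concat]
          rw [hlast] at this; exact (Option.some_injective _ this).symm
        have hinv : (FreeGroup.mk [x])⁻¹ = FreeGroup.mk [(x.1, !x.2)] := by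
          rw [FreeGroup.inv_mk]; simp [FreeGroup.invRev]
        have hgconj : g = FreeGroup.mk [x] * FreeGroup.mk M * (FreeGroup.mk [x])⁻¹ := by
          rw [hinv, FreeGroup.mul_mk, FreeGroup.mul_mk, ← FreeGroup.mk_toWord (x := g), hL, ha]
          simp
        have hlen : (FreeGroup.toWord (FreeGroup.mk M)).length ≤ n := by
          have h1 : (FreeGroup.toWord (FreeGroup.mk M)).length ≤ M.length := by
            rw [FreeGroup.toWord_mk]
            exact FreeGroup.Red.length_le FreeGroup.reduce.red
          have h2 : g.toWord.length = M.length + 2 := by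
            rw [hL]; simp
          omega
        obtain ⟨g', hg', hcyc⟩ := ih (FreeGroup.mk M) hlen
        refine ⟨g', ?_, hcyc⟩
        rw [hg', ConjClasses.mk_eq_mk_iff_isConj, isConj_iff]
        exact ⟨FreeGroup.mk [x], hgconj.symm⟩

lemma exists_cycRed_rep (c : ConjClasses (FreeGroup X)) :
    ∃ g : FreeGroup X, ConjClasses.mk g = c ∧ IsCycRed g := by
  obtain ⟨g0, rfl⟩ := ConjClasses.exists_rep c
  exact exists_cycRed_conj (FreeGroup.toWord g0).length g0 le_rfl

lemma mk_mem_closure_of_letters {S : Set X} :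
    ∀ L : List (X × Bool), (∀ p ∈ L, p.1 ∈ S) →
      FreeGroup.mk L ∈ Subgroup.closure (FreeGroup.of '' S) := by
  intro L
  induction L with
  | nil => intro _; rw [← FreeGroup.one_eq_mk]; exact one_mem _
  | cons p L ihL =>
    intro h
    have h1 : FreeGroup.mk (p :: L) = FreeGroup.mk [p] * FreeGroup.mk L := by
      rw [FreeGroup.mul_mk]; rfl
    rw [h1]
    have hp : p.1 ∈ S := h p List.mem_cons_self
    have hmem : FreeGroup.of p.1 ∈ Subgroup.closure (FreeGroup.of '' S) :=
      Subgroup.subset_closure ⟨p.1, hp, rfl⟩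
    have hsingle : FreeGroup.mk [p] ∈ Subgroup.closure (FreeGroup.of '' S) := by
      obtain ⟨px, pb⟩ := p
      cases pb with
      | false =>
        have : FreeGroup.mk [(px, false)] = (FreeGroup.of px)⁻¹ := by
          show _ = (FreeGroup.mk [(px, true)])⁻¹
          rw [FreeGroup.inv_mk]
          simp [FreeGroup.invRev]
        rw [this]; exact inv_mem hmem
      | true => exact hmem
    exact mul_mem hsingle (ihL fun q hq => h q (List.mem_cons_of_mem _ hq))

lemma rep_in_closure {S : Set X} (c : ConjClasses (FreeGroup X))
    (h : usedLetters c ⊆ S) :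
    ∃ g, ConjClasses.mk g = c ∧ g ∈ Subgroup.closure (FreeGroup.of '' S) := by
  obtain ⟨g, hg, hcyc⟩ := exists_cycRed_rep c
  refine ⟨g, hg, ?_⟩
  have hmem := mk_mem_closure_of_letters (S := S) (FreeGroup.toWord g) ?_
  · rwa [FreeGroup.mk_toWord] at hmem
  · intro p hp
    exact h ⟨g, hg, hcyc, p.2, by rw [Prod.mk.eta]; exact hp⟩

lemma usedLetters_nonempty {c : ConjClasses (FreeGroup X)}
    (hc : c ≠ ConjClasses.mk 1) : (usedLetters c).Nonempty := by
  obtain ⟨g, hg, hcyc⟩ := exists_cycRed_rep c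
  have hne : FreeGroup.toWord g ≠ [] := by
    intro h
    exact hc (by rw [← hg, FreeGroup.toWord_eq_nil_iff.mp h])
  obtain ⟨p, hp⟩ := List.exists_mem_of_ne_nil _ hne
  exact ⟨p.1, g, hg, hcyc, p.2, by rw [Prod.mk.eta]; exact hp⟩

lemma of_not_mem_closure {S : Set X} {x : X} (hx : x ∉ S) :
    FreeGroup.of x ∉ Subgroup.closure (FreeGroup.of '' S) := by
  classical
  intro h
  set χ : FreeGroup X →* Multiplicative ℤ :=
    FreeGroup.lift (fun y => if y = x then Multiplicative.ofAdd (1 : ℤ) else 1) with hχ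
  have hker : Subgroup.closure (FreeGroup.of '' S) ≤ χ.ker := by
    rw [Subgroup.closure_le]
    rintro _ ⟨y, hy, rfl⟩
    have hyx : y ≠ x := fun h' => hx (h' ▸ hy)
    simp [MonoidHom.mem_ker, hχ, FreeGroup.lift_apply_of, if_neg hyx]
  have h2 := hker h
  rw [MonoidHom.mem_ker, hχ, FreeGroup.lift_apply_of, if_pos rfl] at h2
  exact absurd (congrArg Multiplicative.toAdd h2) (by simp)

lemma closure_ne_top {S : Set X} {x : X} (hx : x ∉ S) :
    Subgroup.closure (FreeGroup.of '' S) ≠ ⊤ := fun h =>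
  of_not_mem_closure hx (h ▸ Subgroup.mem_top _)

theorem closure_splitting (S : Set X) :
    IsFreeSplitting (Subgroup.closure (FreeGroup.of '' S))
      (Subgroup.closure (FreeGroup.of '' Sᶜ)) := by
  classical
  set A := Subgroup.closure (FreeGroup.of '' S) with hA
  set B := Subgroup.closure (FreeGroup.of '' Sᶜ) with hB
  set fS : FreeGroup ↥S →* FreeGroup X := FreeGroup.lift (fun s => FreeGroup.of s.1) with hfS
  set fT : FreeGroup ↥(Sᶜ) →* FreeGroup X := FreeGroup.lift (fun s => FreeGroup.of s.1) with hfT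
  set rS : FreeGroup X →* FreeGroup ↥S :=
    FreeGroup.lift (fun x => if h : x ∈ S then FreeGroup.of (⟨x, h⟩ : ↥S) else 1) with hrS
  set rT : FreeGroup X →* FreeGroup ↥(Sᶜ) :=
    FreeGroup.lift (fun x => if h : x ∈ Sᶜ then FreeGroup.of (⟨x, h⟩ : ↥(Sᶜ)) else 1) with hrT
  have hrfS : ∀ u, rS (fS u) = u := by
    intro u
    have : rS.comp fS = MonoidHom.id _ := by
      apply FreeGroup.ext_hom
      intro s
      simp [hrS, hfS, FreeGroup.lift_apply_of, dif_pos s.2]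
    exact DFunLike.congr_fun this u
  have hrfT : ∀ u, rT (fT u) = u := by
    intro u
    have : rT.comp fT = MonoidHom.id _ := by
      apply FreeGroup.ext_hom
      intro s
      show rT (fT (FreeGroup.of s)) = FreeGroup.of s
      rw [hfT, FreeGroup.lift_apply_of, hrT, FreeGroup.lift_apply_of, dif_pos s.2]
    exact DFunLike.congr_fun this u
  have hrangeS : fS.range = A := by
    rw [hfS, FreeGroup.range_lift_eq_closure, hA]
    congr 1
    ext g
    constructor
    · rintro ⟨s, rfl⟩; exact ⟨s.1, s.2, rfl⟩
    · rintro ⟨y, hy, rfl⟩; exact ⟨⟨y, hy⟩, rfl⟩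
  have hrangeT : fT.range = B := by
    rw [hfT, FreeGroup.range_lift_eq_closure, hB]
    congr 1
    ext g
    constructor
    · rintro ⟨s, rfl⟩; exact ⟨s.1, s.2, rfl⟩
    · rintro ⟨y, hy, rfl⟩; exact ⟨⟨y, hy⟩, rfl⟩
  have keyS : ∀ a : A, fS (rS a.1) = a.1 := by
    rintro ⟨a, ha⟩
    rw [← hrangeS] at ha
    obtain ⟨u, rfl⟩ := ha
    rw [hrfS]
  have keyT : ∀ b : B, fT (rT b.1) = b.1 := by
    rintro ⟨b, hb⟩
    rw [← hrangeT] at hb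
    obtain ⟨u, rfl⟩ := hb
    rw [hrfT]
  set E : Monoid.Coprod (FreeGroup ↥S) (FreeGroup ↥(Sᶜ)) →* FreeGroup X := Monoid.Coprod.lift fS fT with hE
  set R : FreeGroup X →* Monoid.Coprod (FreeGroup ↥S) (FreeGroup ↥(Sᶜ)) :=
    FreeGroup.lift (fun x => if h : x ∈ S then Monoid.Coprod.inl (FreeGroup.of (⟨x, h⟩ : ↥S))
      else Monoid.Coprod.inr (FreeGroup.of (⟨x, h⟩ : ↥(Sᶜ)))) with hR
  have hRE : R.comp E = MonoidHom.id _ := by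
    apply Monoid.Coprod.hom_ext
    · apply FreeGroup.ext_hom
      intro s
      simp only [MonoidHom.comp_apply, MonoidHom.id_comp]
      rw [hE, Monoid.Coprod.lift_apply_inl, hfS, FreeGroup.lift_apply_of, hR, FreeGroup.lift_apply_of,
        dif_pos s.2]
    · apply FreeGroup.ext_hom
      intro s
      simp only [MonoidHom.comp_apply, MonoidHom.id_comp]
      rw [hE, Monoid.Coprod.lift_apply_inr, hfT, FreeGroup.lift_apply_of, hR, FreeGroup.lift_apply_of,
        dif_neg s.2]
  have hEinj : Function.Injective E :=
    Function.LeftInverse.injective (g := R) (fun z => DFunLike.congr_fun hRE z)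
  set pS : A →* FreeGroup ↥S := rS.comp A.subtype with hpS
  set pT : B →* FreeGroup ↥(Sᶜ) := rT.comp B.subtype with hpT
  set qS : FreeGroup ↥S →* A := fS.codRestrict A (fun u => hrangeS ▸ ⟨u, rfl⟩) with hqS
  set qT : FreeGroup ↥(Sᶜ) →* B := fT.codRestrict B (fun u => hrangeT ▸ ⟨u, rfl⟩) with hqT
  have hqpS : qS.comp pS = MonoidHom.id A := by
    ext a
    show fS (rS a.1) = a.1
    exact keyS a
  have hqpT : qT.comp pT = MonoidHom.id B := by
    ext b
    show fT (rT b.1) = b.1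
    exact keyT b
  have hmapinj : Function.Injective (Monoid.Coprod.map pS pT) := by
    have : (Monoid.Coprod.map qS qT).comp (Monoid.Coprod.map pS pT) = MonoidHom.id _ := by
      rw [Monoid.Coprod.map_comp_map, hqpS, hqpT, Monoid.Coprod.map_id_id]
    exact Function.LeftInverse.injective
      (g := Monoid.Coprod.map qS qT) (fun z => DFunLike.congr_fun this z)
  have hfac : Monoid.Coprod.lift A.subtype B.subtype = E.comp (Monoid.Coprod.map pS pT) := by
    apply Monoid.Coprod.hom_ext
    · ext a
      show A.subtype a = E (Monoid.Coprod.inl (pS a))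
      rw [hE, Monoid.Coprod.lift_apply_inl]
      exact (keyS a).symm
    · ext b
      show B.subtype b = E (Monoid.Coprod.inr (pT b))
      rw [hE, Monoid.Coprod.lift_apply_inr]
      exact (keyT b).symm
  constructor
  · rw [hfac]
    exact hEinj.comp hmapinj
  · have : (Monoid.Coprod.lift A.subtype B.subtype).range = ⊤ := by
      rw [← top_le_iff, ← FreeGroup.closure_range_of X, Subgroup.closure_le]
      rintro _ ⟨x, rfl⟩
      by_cases hx : x ∈ S
      · refine ⟨Monoid.Coprod.inl ⟨FreeGroup.of x, Subgroup.subset_closure ⟨x, hx, rfl⟩⟩, ?_⟩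
        rw [Monoid.Coprod.lift_apply_inl]; rfl
      · refine ⟨Monoid.Coprod.inr ⟨FreeGroup.of x, Subgroup.subset_closure ⟨x, hx, rfl⟩⟩, ?_⟩
        rw [Monoid.Coprod.lift_apply_inr]; rfl
    exact MonoidHom.range_eq_top.mp this

lemma coprod_map_equiv_bijective {M N M' N' : Type} [Monoid M] [Monoid N] [Monoid M'] [Monoid N']
    (eM : M ≃* M') (eN : N ≃* N') :
    Function.Bijective (Monoid.Coprod.map eM.toMonoidHom eN.toMonoidHom) := by
  have h1 : (Monoid.Coprod.map eM.symm.toMonoidHom eN.symm.toMonoidHom).comp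
      (Monoid.Coprod.map eM.toMonoidHom eN.toMonoidHom) = MonoidHom.id _ := by
    rw [Monoid.Coprod.map_comp_map]
    have e1 : eM.symm.toMonoidHom.comp eM.toMonoidHom = MonoidHom.id M := by ext x; simp
    have e2 : eN.symm.toMonoidHom.comp eN.toMonoidHom = MonoidHom.id N := by ext x; simp
    rw [e1, e2, Monoid.Coprod.map_id_id]
  have h2 : (Monoid.Coprod.map eM.toMonoidHom eN.toMonoidHom).comp
      (Monoid.Coprod.map eM.symm.toMonoidHom eN.symm.toMonoidHom) = MonoidHom.id _ := by
    rw [Monoid.Coprod.map_comp_map]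
    have e1 : eM.toMonoidHom.comp eM.symm.toMonoidHom = MonoidHom.id M' := by ext x; simp
    have e2 : eN.toMonoidHom.comp eN.symm.toMonoidHom = MonoidHom.id N' := by ext x; simp
    rw [e1, e2, Monoid.Coprod.map_id_id]
  exact ⟨Function.LeftInverse.injective (g := _) (fun z => DFunLike.congr_fun h1 z),
    Function.RightInverse.surjective (g := _) (fun z => DFunLike.congr_fun h2 z)⟩

lemma isFreeSplitting_map {F : Type} [Group F] {A B : Subgroup F}
    (h : IsFreeSplitting A B) (e : F ≃* F) :
    IsFreeSplitting (A.map e.toMonoidHom) (B.map e.toMonoidHom) := by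
  set eA : A ≃* A.map e.toMonoidHom := e.subgroupMap A with heA
  set eB : B ≃* B.map e.toMonoidHom := e.subgroupMap B with heB
  have hcomp : (Monoid.Coprod.lift (A.map e.toMonoidHom).subtype
        (B.map e.toMonoidHom).subtype).comp
        (Monoid.Coprod.map eA.toMonoidHom eB.toMonoidHom)
      = e.toMonoidHom.comp (Monoid.Coprod.lift A.subtype B.subtype) := by
    apply Monoid.Coprod.hom_ext
    · ext a
      show (A.map e.toMonoidHom).subtype (eA a) = e (A.subtype a)
      rfl
    · ext b
      show (B.map e.toMonoidHom).subtype (eB b) = e (B.subtype b)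
      rfl
  have hmb := coprod_map_equiv_bijective eA eB
  have hright : Function.Bijective
      (e.toMonoidHom.comp (Monoid.Coprod.lift A.subtype B.subtype)) :=
    e.bijective.comp h
  rw [← hcomp] at hright
  constructor
  · intro x y hxy
    obtain ⟨x', rfl⟩ := hmb.2 x
    obtain ⟨y', rfl⟩ := hmb.2 y
    have : (Monoid.Coprod.lift (A.map e.toMonoidHom).subtype (B.map e.toMonoidHom).subtype).comp
        (Monoid.Coprod.map eA.toMonoidHom eB.toMonoidHom) x'
      = (Monoid.Coprod.lift (A.map e.toMonoidHom).subtype (B.map e.toMonoidHom).subtype).comp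
        (Monoid.Coprod.map eA.toMonoidHom eB.toMonoidHom) y' := hxy
    exact congrArg _ (hright.1 this)
  · intro z
    obtain ⟨x', hx'⟩ := hright.2 z
    exact ⟨_, hx'⟩

lemma actC_mk {X : Type} (φ : FreeGroup X ≃* FreeGroup X) (a : FreeGroup X) :
    actC φ (ConjClasses.mk a) = ConjClasses.mk (φ a) := rfl

lemma actC_actC {X : Type} (φ : FreeGroup X ≃* FreeGroup X) (c : ConjClasses (FreeGroup X)) :
    actC φ.symm (actC φ c) = c := by
  obtain ⟨a, rfl⟩ := ConjClasses.exists_rep c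
  rw [actC_mk, actC_mk, MulEquiv.symm_apply_apply]

end AuxLemmas

/-- If some automorphism carries the pair of nontrivial cyclic words `(v, w)`
to a good pair, then there is a proper free splitting `A * B` of `F(X)` to which both
`v` and `w` are elliptic. -/
theorem splitting_of_good_pair {X : Type} [DecidableEq X]
    (v w : ConjClasses (FreeGroup X))
    (hv : v ≠ ConjClasses.mk 1) (hw : w ≠ ConjClasses.mk 1)
    (hgood : ∃ φ : FreeGroup X ≃* FreeGroup X, GoodPair (actC φ v) (actC φ w)) :
    ∃ A B : Subgroup (FreeGroup X), IsFreeSplitting A B ∧ A ≠ ⊤ ∧ B ≠ ⊤ ∧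
      EllipticC A B v ∧ EllipticC A B w := by
  classical
  obtain ⟨φ, hgp⟩ := hgood
  have hv' : actC φ v ≠ ConjClasses.mk 1 := by
    intro h
    apply hv
    have h2 := congrArg (actC φ.symm) h
    rw [actC_actC] at h2
    rw [h2, actC_mk, _root_.map_one]
  have hw' : actC φ w ≠ ConjClasses.mk 1 := by
    intro h
    apply hw
    have h2 := congrArg (actC φ.symm) h
    rw [actC_actC] at h2
    rw [h2, actC_mk, _root_.map_one]
  obtain ⟨S, hvS, hwS, x₀, hx₀, y₀, hy₀⟩ :
      ∃ S : Set X, usedLetters (actC φ v) ⊆ S ∧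
        (usedLetters (actC φ w) ⊆ S ∨ usedLetters (actC φ w) ⊆ Sᶜ) ∧
        ∃ x₀, x₀ ∉ S ∧ ∃ y₀, y₀ ∈ S := by
    rcases hgp with hfr | hdj
    · rw [Frugal, Ne, Set.eq_univ_iff_forall] at hfr
      push_neg at hfr
      obtain ⟨x, hx⟩ := hfr
      obtain ⟨y₀, hy₀⟩ := usedLetters_nonempty hv'
      refine ⟨{x}ᶜ, ?_, Or.inl ?_, x, by simp, y₀, ?_⟩
      · intro y hy
        simp only [Set.mem_compl_iff, Set.mem_singleton_iff]
        rintro rfl; exact hx (Or.inl hy)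
      · intro y hy
        simp only [Set.mem_compl_iff, Set.mem_singleton_iff]
        rintro rfl; exact hx (Or.inr hy)
      · simp only [Set.mem_compl_iff, Set.mem_singleton_iff]
        rintro rfl; exact hx (Or.inl hy₀)
    · obtain ⟨y₀, hy₀⟩ := usedLetters_nonempty hv'
      obtain ⟨x₀, hx₀⟩ := usedLetters_nonempty hw'
      refine ⟨usedLetters (actC φ v), le_refl _, Or.inr ?_, x₀, ?_, y₀, hy₀⟩
      · intro y hy hyv
        have : y ∈ usedLetters (actC φ v) ∩ usedLetters (actC φ w) := ⟨hyv, hy⟩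
        rw [hdj] at this
        exact this
      · intro hx
        have : x₀ ∈ usedLetters (actC φ v) ∩ usedLetters (actC φ w) := ⟨hx, hx₀⟩
        rw [hdj] at this
        exact this
  set A₀ := Subgroup.closure (FreeGroup.of '' S) with hA₀def
  set B₀ := Subgroup.closure (FreeGroup.of '' Sᶜ) with hB₀def
  have hsplit₀ : IsFreeSplitting A₀ B₀ := closure_splitting S
  have hA₀ : A₀ ≠ ⊤ := closure_ne_top hx₀
  have hB₀ : B₀ ≠ ⊤ := closure_ne_top (by simpa using hy₀)
  obtain ⟨gv, hgv, hgvA⟩ := rep_in_closure (actC φ v) hvS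
  have hgwEx : ∃ gw, ConjClasses.mk gw = actC φ w ∧ (gw ∈ A₀ ∨ gw ∈ B₀) := by
    rcases hwS with h | h
    · obtain ⟨gw, h1, h2⟩ := rep_in_closure _ h; exact ⟨gw, h1, Or.inl h2⟩
    · obtain ⟨gw, h1, h2⟩ := rep_in_closure _ h; exact ⟨gw, h1, Or.inr h2⟩
  obtain ⟨gw, hgw, hgwAB⟩ := hgwEx
  have hcoid : φ.toMonoidHom.comp φ.symm.toMonoidHom = MonoidHom.id _ := by ext x; simp
  have hmapne : ∀ C : Subgroup (FreeGroup X), C ≠ ⊤ → C.map φ.symm.toMonoidHom ≠ ⊤ := by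
    intro C hC h
    apply hC
    have h2 := congrArg (Subgroup.map φ.toMonoidHom) h
    rw [Subgroup.map_map, hcoid, Subgroup.map_id,
      Subgroup.map_top_of_surjective _ φ.surjective] at h2
    exact h2
  refine ⟨A₀.map φ.symm.toMonoidHom, B₀.map φ.symm.toMonoidHom,
    isFreeSplitting_map hsplit₀ φ.symm, hmapne _ hA₀, hmapne _ hB₀, ?_, ?_⟩
  · refine ⟨φ.symm gv, ?_, Or.inl ⟨gv, hgvA, rfl⟩⟩
    have h2 : actC φ.symm (ConjClasses.mk gv) = v := by rw [hgv, actC_actC]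
    rw [actC_mk] at h2
    exact h2
  · have h2 : actC φ.symm (ConjClasses.mk gw) = w := by rw [hgw, actC_actC]
    rw [actC_mk] at h2
    rcases hgwAB with hmem | hmem
    · exact ⟨φ.symm gw, h2, Or.inl ⟨gw, hmem, rfl⟩⟩
    · exact ⟨φ.symm gw, h2, Or.inr ⟨gw, hmem, rfl⟩⟩
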